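/- Let p(z) = Σ_{l∈I} B_l z^{m_l} + C be a polynomial over ℂ, where I is a finite index set of cardinality at most n, the exponents m_l are distinct positive integers, and B_l ≠ 0 for all l ∈ I and C ≠ 0. Then every root of p has multiplicity at most n. -/

import Mathlib

open Polynomial

/-- Key lemma: a nonzero complex polynomial has root multiplicity at any nonzero point
strictly less than the number of its nonzero terms. -/
lemma aux_rootMult_lt_support_card :
    ∀ d : ℕ, ∀ p : ℂ[X], p.natDegree ≤ d → p ≠ 0 → ∀ α : ℂ, α ≠ 0 →
      rootMultiplicity α p < p.support.card := by
  intro d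
  induction d with
  | zero =>
    intro p hd hp α hα
    have hcC : p = Polynomial.C (p.coeff 0) := eq_C_of_natDegree_eq_zero (Nat.le_zero.mp hd)
    have : rootMultiplicity α p = 0 := by
      apply rootMultiplicity_eq_zero
      intro hroot
      rw [IsRoot, hcC, eval_C] at hroot
      exact hp (by rw [hcC, hroot, map_zero])
    rw [this]
    exact Finset.card_pos.mpr (nonempty_support_iff.mpr hp)
  | succ d ih =>
    intro p hd hp α hα
    -- Factor out the trailing power of X: p = X^t * q with q.coeff 0 ≠ 0
    set t := p.natTrailingDegree with ht
    have hdvd : X ^ t ∣ p := by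
      rw [X_pow_dvd_iff]
      exact fun k hk => coeff_eq_zero_of_lt_natTrailingDegree hk
    obtain ⟨q, hq⟩ := hdvd
    have hq0 : q ≠ 0 := by rintro rfl; simp at hq; exact hp hq
    have hq0' : q.coeff 0 ≠ 0 := by
      have : p.coeff t = q.coeff 0 := by
        rw [hq, X_pow_mul, coeff_mul_X_pow', if_pos le_rfl, Nat.sub_self]
      rw [← this]
      exact trailingCoeff_nonzero_iff_nonzero.mpr hp
    -- supports have the same cardinality
    have hsupp : p.support = q.support.image (· + t) := by
      ext k
      simp only [mem_support_iff, Finset.mem_image]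
      constructor
      · intro hk
        have hkt : t ≤ k := natTrailingDegree_le_of_ne_zero hk
        refine ⟨k - t, ?_, by omega⟩
        have : p.coeff k = q.coeff (k - t) := by
          rw [hq, X_pow_mul, coeff_mul_X_pow', if_pos hkt]
        rwa [this] at hk
      · rintro ⟨j, hj, rfl⟩
        have : p.coeff (j + t) = q.coeff j := by
          rw [hq, X_pow_mul, coeff_mul_X_pow]
        rwa [this]
    have hcard : p.support.card = q.support.card := by
      rw [hsupp, Finset.card_image_of_injective _ (add_left_injective t)]
    -- root multiplicity at α of p equals that of q
    have hrm : rootMultiplicity α p = rootMultiplicity α q := by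
      rw [hq, rootMultiplicity_mul (by rw [← hq]; exact hp),
        rootMultiplicity_eq_zero (by simp [IsRoot, hα]), zero_add]
    rw [hrm, hcard]
    by_cases hroot : rootMultiplicity α q = 0
    · rw [hroot]
      exact Finset.card_pos.mpr (nonempty_support_iff.mpr hq0)
    -- α is a root of q; use the derivative
    have hroot' : q.IsRoot α := by
      by_contra h
      exact hroot (rootMultiplicity_eq_zero h)
    have hqd : q.natDegree ≠ 0 := by
      intro h
      have := Polynomial.eq_C_of_natDegree_eq_zero h
      rw [this] at hroot'
      simp [IsRoot] at hroot'
      exact hq0' hroot'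
    have hq'0 : derivative q ≠ 0 := by
      intro h
      exact hqd (natDegree_eq_zero_of_derivative_eq_zero h)
    have hdq : (derivative q).natDegree ≤ d := by
      have h1 : (derivative q).natDegree < q.natDegree := natDegree_derivative_lt hqd
      have h2 : q.natDegree ≤ p.natDegree := by
        rw [hq, natDegree_mul (pow_ne_zero t X_ne_zero) hq0, natDegree_X_pow]
        omega
      omega
    have hIH := ih (derivative q) hdq hq'0 α hα
    -- derivative drops multiplicity by exactly one
    have hdrv : rootMultiplicity α (derivative q) = rootMultiplicity α q - 1 :=
      derivative_rootMultiplicity_of_root hroot'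
    -- support of derivative is smaller
    have hscard : (derivative q).support.card + 1 ≤ q.support.card := by
      have h0 : (0 : ℕ) ∈ q.support := mem_support_iff.mpr hq0'
      have hsub : (derivative q).support.card ≤ (q.support.erase 0).card := by
        apply Finset.card_le_card_of_injOn (fun i => i + 1)
        · intro i hi
          simp only [Finset.mem_coe] at hi ⊢
          rw [mem_support_iff, coeff_derivative] at hi
          rw [Finset.mem_erase, mem_support_iff]
          constructor
          · omega
          · intro h; rw [h] at hi; simp at hi
        · intro a _ b _ hab
          simpa using hab
      have := Finset.card_erase_of_mem h0
      have hpos : 0 < q.support.card := Finset.card_pos.mpr ⟨0, h0⟩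
      omega
    have hpos : 1 ≤ rootMultiplicity α q := Nat.one_le_iff_ne_zero.mpr hroot
    calc rootMultiplicity α q = (rootMultiplicity α q - 1) + 1 :=
          (Nat.succ_pred_eq_of_pos hpos).symm
      _ = rootMultiplicity α (derivative q) + 1 := by rw [hdrv]
      _ < (derivative q).support.card + 1 := by omega
      _ ≤ q.support.card := hscard

theorem stmt_1 {ι : Type*} (n : ℕ) (I : Finset ι) (hI : I.card ≤ n)
    (m : ι → ℕ) (hm : ∀ l ∈ I, 1 ≤ m l) (hminj : Set.InjOn m I)
    (B : ι → ℂ) (hB : ∀ l ∈ I, B l ≠ 0) (c : ℂ) (hc : c ≠ 0) :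
    ∀ α : ℂ,
      rootMultiplicity α (∑ l ∈ I, C (B l) * X ^ (m l) + Polynomial.C c) ≤ n := by
  intro α
  set p : ℂ[X] := ∑ l ∈ I, C (B l) * X ^ (m l) + Polynomial.C c with hpdef
  have hcoeff0 : p.coeff 0 = c := by
    rw [hpdef]
    simp only [coeff_add, finset_sum_coeff, coeff_C_mul, coeff_X_pow, coeff_C]
    have hz : ∀ l ∈ I, B l * (if (0:ℕ) = m l then (1:ℂ) else 0) = 0 := by
      intro l hl
      rw [if_neg (by have := hm l hl; omega), mul_zero]
    rw [Finset.sum_eq_zero hz, zero_add]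
    simp
  have hp0 : p ≠ 0 := fun h => hc (by rw [← hcoeff0, h, coeff_zero])
  by_cases hα : α = 0
  · subst hα
    rw [rootMultiplicity_eq_zero]
    · omega
    · intro h
      rw [IsRoot, ← coeff_zero_eq_eval_zero] at h
      exact hc (hcoeff0 ▸ h)
  · have hlt := aux_rootMult_lt_support_card p.natDegree p le_rfl hp0 α hα
    have hsupp : p.support ⊆ I.image m ∪ {0} := by
      intro k hk
      rw [mem_support_iff] at hk
      rw [hpdef] at hk
      simp only [coeff_add, finset_sum_coeff, coeff_C_mul, coeff_X_pow, coeff_C] at hk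
      by_cases hk0 : k = 0
      · simp [hk0]
      · rw [if_neg hk0, add_zero] at hk
        have : ∃ l ∈ I, ¬ (B l * (if k = m l then (1:ℂ) else 0) = 0) := by
          by_contra h
          push_neg at h
          exact hk (Finset.sum_eq_zero fun l hl => not_not.mp (not_not.mpr (h l hl)))
        obtain ⟨l, hl, hne⟩ := this
        rw [Finset.mem_union, Finset.mem_image]
        left
        refine ⟨l, hl, ?_⟩
        by_contra hkm
        rw [if_neg (fun h => hkm h.symm), mul_zero] at hne
        exact hne rfl
    have hcard : p.support.card ≤ n + 1 := by
      calc p.support.card ≤ (I.image m ∪ {0}).card := Finset.card_le_card hsupp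
        _ ≤ (I.image m).card + 1 := by
            have := Finset.card_union_le (I.image m) ({0} : Finset ℕ)
            simpa using this
        _ ≤ I.card + 1 := by
            have := Finset.card_image_le (s := I) (f := m)
            omega
        _ ≤ n + 1 := by omega
    omega
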